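/- (Universality of the Tutte polynomial.) Let R be a commutative ring, let a, b ∈ R, and let f be a function assigning an element of R to every matroid with finite ground set contained in ℕ, such that: (i) f(M₁) = f(M₂) whenever M₁ and M₂ are isomorphic matroids; (ii) f of the empty matroid equals 1; (iii) for every such matroid M and every element e of its ground set, f(M) = a·f(M∖e) + b·f(M/e) if e is neither a loop nor a coloop, f(M) = f(M∖e)·f(L) if e is a loop, and f(M) = f(M/e)·f(C) if e is a coloop, where f(L) and f(C) denote the values of f on a single loop and a single coloop respectively. Then for every matroid M with finite ground set E of size n and rank r = r(E), one has f(M) = Σ_{B⊆E} a^{(n−|B|)−(r−r(B))} · b^{r(B)} · (f(C)−b)^{r−r(B)} · (f(L)−a)^{|B|−r(B)}; equivalently (when a and b are invertible), f(M) = a^{n−r} b^{r} T(M; f(C)/b, f(L)/a). -/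

import Mathlib

open scoped BigOperators

/-- `r` is the rank function of a matroid: normalized (`r B ≤ |B|`), monotone, submodular. -/
def IsRankFn (r : Finset ℕ → ℕ) : Prop :=
  (∀ B, r B ≤ B.card) ∧ (∀ B C, B ⊆ C → r B ≤ r C) ∧
    (∀ B C, r (B ∪ C) + r (B ∩ C) ≤ r B + r C)

lemma rankfn_empty {r : Finset ℕ → ℕ} (hr : IsRankFn r) : r ∅ = 0 :=
  Nat.le_zero.mp (by simpa using hr.1 ∅)

lemma rankfn_insert_le {r : Finset ℕ → ℕ} (hr : IsRankFn r) (e : ℕ) (B : Finset ℕ) :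
    r (insert e B) ≤ r B + r {e} := by
  have h := hr.2.2 B {e}
  have hu : B ∪ {e} = insert e B := by rw [Finset.union_comm, ← Finset.insert_eq]
  rw [hu] at h
  omega

lemma rankfn_union_le {r : Finset ℕ → ℕ} (hr : IsRankFn r) (B D : Finset ℕ) :
    r (B ∪ D) ≤ r B + D.card := by
  classical
  induction D using Finset.induction_on with
  | empty => simpa using le_refl (r B)
  | @insert x D hx ih =>
    rw [Finset.union_insert]
    have h1 := rankfn_insert_le hr x (B ∪ D)
    have h2 : r {x} ≤ 1 := by simpa using hr.1 {x}
    have h3 : (insert x D).card = D.card + 1 := by rw [Finset.card_insert_of_notMem hx]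
    omega

lemma rankfn_ground {r : Finset ℕ → ℕ} (hr : IsRankFn r) {B C : Finset ℕ} (h : B ⊆ C) :
    r C ≤ r B + (C.card - B.card) := by
  have h1 := rankfn_union_le hr B (C \ B)
  rw [Finset.union_sdiff_of_subset h, Finset.card_sdiff_of_subset h] at h1
  exact h1

lemma isRankFn_contract {r : Finset ℕ → ℕ} (hr : IsRankFn r) (e : ℕ) :
    IsRankFn (fun B => r (insert e B) - r {e}) := by
  have hmono := hr.2.1
  have hle : ∀ B : Finset ℕ, r {e} ≤ r (insert e B) := fun B =>
    hmono _ _ (Finset.singleton_subset_iff.mpr (Finset.mem_insert_self e B))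
  refine ⟨fun B => ?_, fun B C hBC => ?_, fun B C => ?_⟩
  · show r (insert e B) - r {e} ≤ B.card
    have h1 := rankfn_insert_le hr e B
    have h2 := hr.1 B
    omega
  · show r (insert e B) - r {e} ≤ r (insert e C) - r {e}
    have h := hmono _ _ (Finset.insert_subset_insert e hBC)
    omega
  · show r (insert e (B ∪ C)) - r {e} + (r (insert e (B ∩ C)) - r {e}) ≤
      (r (insert e B) - r {e}) + (r (insert e C) - r {e})
    have hu : insert e (B ∪ C) = insert e B ∪ insert e C := Finset.insert_union_distrib e B C
    have hi : insert e (B ∩ C) = insert e B ∩ insert e C := Finset.insert_inter_distrib B C e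
    have h := hr.2.2 (insert e B) (insert e C)
    rw [← hu, ← hi] at h
    have h1 := hle (B ∪ C)
    have h2 := hle (B ∩ C)
    omega

/-- **Universality of the Tutte polynomial.** Let `R` be a commutative ring, `a b : R`, and let
`f` assign an element of `R` to each matroid `(E, r)` with ground set `E ⊆ ℕ`, such that:
(i) `f` is invariant under matroid isomorphism; (ii) `f` of the empty matroid is `1`;
(iii) `f M = a·f(M\e) + b·f(M/e)` if `e ∈ E` is neither a loop nor a coloop,
`f M = f(M\e)·f(L)` if `e` is a loop, and `f M = f(M/e)·f(C)` if `e` is a coloop, where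
`L = ({0}, B ↦ 0)` is a single loop and `C = ({0}, B ↦ |B ∩ {0}|)` is a single coloop.
Then `f M = Σ_{B ⊆ E} a^((n-|B|)-(r E - r B)) b^(r B) (f C - b)^(r E - r B) (f L - a)^(|B| - r B)`,
i.e. (for `a`, `b` invertible) `f M = a^(n-r) b^r T(M; f(C)/b, f(L)/a)`. -/
theorem tutte_universality {R : Type} [CommRing R] (a b : R)
    (f : Finset ℕ → (Finset ℕ → ℕ) → R)
    (hiso : ∀ (E₁ E₂ : Finset ℕ) (r₁ r₂ : Finset ℕ → ℕ), IsRankFn r₁ → IsRankFn r₂ →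
      (∃ φ : ℕ → ℕ, Set.BijOn φ ↑E₁ ↑E₂ ∧ ∀ B ⊆ E₁, r₂ (Finset.image φ B) = r₁ B) →
      f E₁ r₁ = f E₂ r₂)
    (hempty : f ∅ (fun _ => 0) = 1)
    (hrec : ∀ E r, IsRankFn r → ∀ e ∈ E,
      ((r {e} ≠ 0 ∧ r (E.erase e) + 1 ≠ r E) →
        f E r = a * f (E.erase e) r +
          b * f (E.erase e) (fun B => r (insert e B) - r {e})) ∧
      (r {e} = 0 →
        f E r = f (E.erase e) r * f {0} (fun _ => 0)) ∧
      (r (E.erase e) + 1 = r E →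
        f E r = f (E.erase e) (fun B => r (insert e B) - r {e}) *
          f {0} (fun B => (B ∩ {0}).card)))
    (E : Finset ℕ) (r : Finset ℕ → ℕ) (hr : IsRankFn r) :
    f E r = ∑ B ∈ E.powerset,
      a ^ ((E.card - B.card) - (r E - r B)) * b ^ r B *
        (f {0} (fun B => (B ∩ {0}).card) - b) ^ (r E - r B) *
        (f {0} (fun _ => 0) - a) ^ (B.card - r B) := by
  have hzero : IsRankFn (fun _ : Finset ℕ => 0) :=
    ⟨fun _ => Nat.zero_le _, fun _ _ _ => le_rfl, fun _ _ => Nat.le_refl _⟩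
  have hfempty : ∀ r0 : Finset ℕ → ℕ, IsRankFn r0 → f ∅ r0 = 1 := by
    intro r0 hr0
    rw [← hempty]
    refine hiso ∅ ∅ r0 _ hr0 hzero ⟨id, ?_, ?_⟩
    · simpa using Set.bijOn_id (∅ : Set ℕ)
    · intro B hB
      rw [Finset.subset_empty.mp hB, rankfn_empty hr0]
  suffices H : ∀ n (E : Finset ℕ) (r : Finset ℕ → ℕ), E.card ≤ n → IsRankFn r →
      f E r = ∑ B ∈ E.powerset,
        a ^ ((E.card - B.card) - (r E - r B)) * b ^ r B *
          (f {0} (fun B => (B ∩ {0}).card) - b) ^ (r E - r B) *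
          (f {0} (fun _ => 0) - a) ^ (B.card - r B) by
    exact H E.card E r le_rfl hr
  clear hr E r
  intro n
  induction n with
  | zero =>
    intro E r hE hr
    rw [Finset.card_eq_zero.mp (Nat.le_zero.mp hE)]
    simp [rankfn_empty hr, hfempty r hr]
  | succ n ih =>
    intro E r hE hr
    rcases Finset.eq_empty_or_nonempty E with rfl | ⟨e, he⟩
    · simp [rankfn_empty hr, hfempty r hr]
    set c : R := f {0} (fun B => (B ∩ {0}).card) with hc
    set d : R := f {0} (fun _ => 0) with hd
    set E' := E.erase e with hE'def
    have heE' : e ∉ E' := Finset.notMem_erase e E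
    have hins : insert e E' = E := Finset.insert_erase he
    have hcard : E'.card + 1 = E.card := Finset.card_erase_add_one he
    have hE'n : E'.card ≤ n := by omega
    have hre1 : r {e} ≤ 1 := by simpa using hr.1 {e}
    have hEle : r E ≤ r E' + r {e} := by
      have h := rankfn_insert_le hr e E'
      rw [hins] at h
      exact h
    have hE'le : r E' ≤ r E := hr.2.1 _ _ (Finset.erase_subset e E)
    have hdisj : Disjoint E'.powerset (Finset.image (insert e) E'.powerset) := by
      rw [Finset.disjoint_left]
      rintro B hB hB'
      simp only [Finset.mem_image, Finset.mem_powerset] at hB hB'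
      obtain ⟨C, _, rfl⟩ := hB'
      exact heE' (hB (Finset.mem_insert_self e C))
    have hinj : ∀ B ∈ E'.powerset, ∀ C ∈ E'.powerset, insert e B = insert e C → B = C := by
      intro B hB C hC h
      have hB' : e ∉ B := fun hx => heE' (Finset.mem_powerset.mp hB hx)
      have hC' : e ∉ C := fun hx => heE' (Finset.mem_powerset.mp hC hx)
      rw [← Finset.erase_insert hB', h, Finset.erase_insert hC']
    have hsplit : ∀ g : Finset ℕ → R, ∑ B ∈ E.powerset, g B
        = ∑ B ∈ E'.powerset, g B + ∑ B ∈ E'.powerset, g (insert e B) := by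
      intro g
      rw [← hins, Finset.powerset_insert, Finset.sum_union hdisj, Finset.sum_image hinj]
    have hrecs := hrec E r hr e he
    by_cases hloop : r {e} = 0
    · -- loop case
      have hEE' : r E = r E' := le_antisymm (by omega) hE'le
      rw [hrecs.2.1 hloop, ih E' r hE'n hr, hsplit, Finset.sum_mul,
        ← Finset.sum_add_distrib]
      refine Finset.sum_congr rfl fun B hB => ?_
      have hBE : B ⊆ E' := Finset.mem_powerset.mp hB
      have heB : e ∉ B := fun hx => heE' (hBE hx)
      have hcb : B.card ≤ E'.card := Finset.card_le_card hBE
      have hrb : r B ≤ B.card := hr.1 B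
      have hg : r E' ≤ r B + (E'.card - B.card) := rankfn_ground hr hBE
      have hrBle : r B ≤ r E' := hr.2.1 _ _ hBE
      have hci : (insert e B).card = B.card + 1 := Finset.card_insert_of_notMem heB
      have h1 : r (insert e B) = r B := by
        have h2 := rankfn_insert_le hr e B
        have h3 := hr.2.1 B (insert e B) (Finset.subset_insert e B)
        omega
      rw [hci, h1,
        show E.card - B.card - (r E - r B) = (E'.card - B.card - (r E' - r B)) + 1 by omega,
        show E.card - (B.card + 1) - (r E - r B) = E'.card - B.card - (r E' - r B) by omega,
        show r E - r B = r E' - r B by omega,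
        show B.card + 1 - r B = (B.card - r B) + 1 by omega,
        pow_succ, pow_succ]
      ring
    · by_cases hcol : r E' + 1 = r E
      · -- coloop case
        have hre : r {e} = 1 := by omega
        have hcontr : ∀ B : Finset ℕ, B ⊆ E' → r (insert e B) = r B + 1 := by
          intro B hBE
          have hu : insert e B ∪ E' = E := by
            rw [Finset.insert_union, Finset.union_eq_right.mpr hBE, hins]
          have hi : insert e B ∩ E' = B := by
            rw [Finset.insert_inter_of_notMem heE', Finset.inter_eq_left.mpr hBE]
          have h := hr.2.2 (insert e B) E'
          rw [hu, hi] at h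
          have h2 := rankfn_insert_le hr e B
          have h3 : r B ≤ r E' := hr.2.1 _ _ hBE
          omega
        have hIH := ih E' (fun B => r (insert e B) - r {e}) hE'n (isRankFn_contract hr e)
        rw [hrecs.2.2 hcol, hIH, hsplit, Finset.sum_mul, ← Finset.sum_add_distrib]
        refine Finset.sum_congr rfl fun B hB => ?_
        have hBE : B ⊆ E' := Finset.mem_powerset.mp hB
        have heB : e ∉ B := fun hx => heE' (hBE hx)
        have hcb : B.card ≤ E'.card := Finset.card_le_card hBE
        have hrb : r B ≤ B.card := hr.1 B
        have hg : r E' ≤ r B + (E'.card - B.card) := rankfn_ground hr hBE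
        have hrBle : r B ≤ r E' := hr.2.1 _ _ hBE
        have hci : (insert e B).card = B.card + 1 := Finset.card_insert_of_notMem heB
        have h1 : r (insert e B) = r B + 1 := hcontr B hBE
        rw [hci, h1, hre, hins,
          show r B + 1 - 1 = r B by omega,
          show E.card - B.card - (r E - r B) = E'.card - B.card - (r E - 1 - r B) by omega,
          show E.card - (B.card + 1) - (r E - (r B + 1)) = E'.card - B.card - (r E - 1 - r B) by omega,
          show r E - r B = (r E - 1 - r B) + 1 by omega,
          show r E - (r B + 1) = r E - 1 - r B by omega,
          show B.card + 1 - (r B + 1) = B.card - r B by omega,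
          pow_succ, pow_succ]
        ring
      · -- neither loop nor coloop
        have hre : r {e} = 1 := by omega
        have hEE' : r E' = r E := by omega
        have hIH1 := ih E' r hE'n hr
        have hIH2 := ih E' (fun B => r (insert e B) - r {e}) hE'n (isRankFn_contract hr e)
        rw [hrecs.1 ⟨hloop, hcol⟩, hIH1, hIH2, hsplit, Finset.mul_sum, Finset.mul_sum,
          ← Finset.sum_add_distrib, ← Finset.sum_add_distrib]
        refine Finset.sum_congr rfl fun B hB => ?_
        have hBE : B ⊆ E' := Finset.mem_powerset.mp hB
        have heB : e ∉ B := fun hx => heE' (hBE hx)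
        have hcb : B.card ≤ E'.card := Finset.card_le_card hBE
        have hrb : r B ≤ B.card := hr.1 B
        have hg : r E' ≤ r B + (E'.card - B.card) := rankfn_ground hr hBE
        have hrBle : r B ≤ r E' := hr.2.1 _ _ hBE
        have hci : (insert e B).card = B.card + 1 := Finset.card_insert_of_notMem heB
        have hsle : r (insert e B) ≤ r B + 1 := by
          have := rankfn_insert_le hr e B; omega
        have hsge : r B ≤ r (insert e B) := hr.2.1 _ _ (Finset.subset_insert e B)
        have hs1 : 1 ≤ r (insert e B) := by
          have := hr.2.1 {e} (insert e B)
            (Finset.singleton_subset_iff.mpr (Finset.mem_insert_self e B))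
          omega
        have hsE : r (insert e B) ≤ r E := by
          refine hr.2.1 _ _ (Finset.insert_subset he (hBE.trans (Finset.erase_subset e E)))
        have hb : b ^ r (insert e B) = b ^ (r (insert e B) - 1) * b := by
          conv_lhs => rw [show r (insert e B) = r (insert e B) - 1 + 1 by omega]
          rw [pow_succ]
        rw [hci, hre, hins, hEE', hb,
          show E.card - B.card - (r E - r B) = (E'.card - B.card - (r E - r B)) + 1 by omega,
          show E.card - (B.card + 1) - (r E - r (insert e B))
            = E'.card - B.card - (r E - 1 - (r (insert e B) - 1)) by omega,
          show r E - r (insert e B) = r E - 1 - (r (insert e B) - 1) by omega,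
          show B.card + 1 - r (insert e B) = B.card - (r (insert e B) - 1) by omega,
          pow_succ]
        ring
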